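/- Let A be an algebraic curvature tensor on a nondegenerate inner product space V and T a self-adjoint linear map. The following are equivalent: (1) A(Tx,y,z,w) = A(x,Ty,z,w) = A(x,y,Tz,w) = A(x,y,z,Tw) for all x,y,z,w; (2) T commutes with every curvature operator R(x,y) (where <R(x,y)z,w> = A(x,y,z,w)); (3) T commutes with every Jacobi operator J(x) (where <J(x)y,z> = A(y,x,x,z)). -/

import Mathlib

/-- For an algebraic curvature tensor `A` and a self-adjoint `T`,
the following are equivalent: (1) `T` may be moved across all four slots of `A`;
(2) `T` commutes with every curvature operator `R(x,y)`;
(3) `T` commutes with every Jacobi operator `J(x)`. -/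
theorem stmt_2 {V : Type*} [AddCommGroup V] [Module ℝ V] [FiniteDimensional ℝ V]
    (B : LinearMap.BilinForm ℝ V) (hBsymm : ∀ x y, B x y = B y x)
    (hBnd : B.Nondegenerate)
    (A : V →ₗ[ℝ] V →ₗ[ℝ] V →ₗ[ℝ] V →ₗ[ℝ] ℝ)
    (hpair : ∀ x y z w, A x y z w = A z w x y)
    (hanti : ∀ x y z w, A x y z w = -A y x z w)
    (hbianchi : ∀ x y z w, A x y z w + A y z x w + A z x y w = 0)
    (Rop : V → V → V →ₗ[ℝ] V)
    (hRop : ∀ x y z w, B (Rop x y z) w = A x y z w)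
    (Jop : V → V →ₗ[ℝ] V)
    (hJop : ∀ x y z, B (Jop x y) z = A y x x z)
    (T : V →ₗ[ℝ] V) (hT : ∀ x y, B (T x) y = B x (T y)) :
    ((∀ x y z w, A (T x) y z w = A x (T y) z w ∧ A x (T y) z w = A x y (T z) w ∧
        A x y (T z) w = A x y z (T w)) ↔
      (∀ x y, T ∘ₗ Rop x y = Rop x y ∘ₗ T)) ∧
    ((∀ x y, T ∘ₗ Rop x y = Rop x y ∘ₗ T) ↔
      (∀ x, T ∘ₗ Jop x = Jop x ∘ₗ T)) := by
  -- equality from nondegeneracy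
  have hBeq : ∀ u v : V, (∀ w, B u w = B v w) → u = v := by
    intro u v h
    have h0 : ∀ w, B (u - v) w = 0 := by
      intro w
      have := h w
      simp only [map_sub, LinearMap.sub_apply]
      linarith
    exact sub_eq_zero.mp (hBnd.1 (u - v) h0)
  -- M34 implies commuting with curvature operators
  have hR_of_M34 : (∀ x y z w, A x y (T z) w = A x y z (T w)) →
      (∀ x y, T ∘ₗ Rop x y = Rop x y ∘ₗ T) := by
    intro M34 x y
    apply LinearMap.ext
    intro z
    apply hBeq
    intro w
    calc B ((T ∘ₗ Rop x y) z) w = B (T (Rop x y z)) w := rfl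
      _ = B (Rop x y z) (T w) := hT _ _
      _ = A x y z (T w) := hRop _ _ _ _
      _ = A x y (T z) w := (M34 x y z w).symm
      _ = B (Rop x y (T z)) w := (hRop _ _ _ _).symm
      _ = B ((Rop x y ∘ₗ T) z) w := rfl
  -- commuting with curvature operators implies M34
  have hM34_of_R : (∀ x y, T ∘ₗ Rop x y = Rop x y ∘ₗ T) →
      (∀ x y z w, A x y (T z) w = A x y z (T w)) := by
    intro h2 x y z w
    have e : T (Rop x y z) = Rop x y (T z) := LinearMap.congr_fun (h2 x y) z
    calc A x y (T z) w = B (Rop x y (T z)) w := (hRop _ _ _ _).symm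
      _ = B (T (Rop x y z)) w := by rw [e]
      _ = B (Rop x y z) (T w) := hT _ _
      _ = A x y z (T w) := hRop _ _ _ _
  -- M34 implies M12
  have hM12_of_M34 : (∀ x y z w, A x y (T z) w = A x y z (T w)) →
      (∀ x y z w, A (T x) y z w = A x (T y) z w) := by
    intro M34 x y z w
    calc A (T x) y z w = A z w (T x) y := hpair _ _ _ _
      _ = A z w x (T y) := M34 _ _ _ _
      _ = A x (T y) z w := (hpair _ _ _ _).symm
  -- M12 and M34 imply M23
  have hM23_of : (∀ x y z w, A (T x) y z w = A x (T y) z w) →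
      (∀ x y z w, A x y (T z) w = A x y z (T w)) →
      (∀ x y z w, A x (T y) z w = A x y (T z) w) := by
    intro M12 M34 x y z w
    linarith [M12 x y z w, M34 x y z w, M12 x z y w, hpair (T x) w y z,
      hbianchi (T x) y z w, hanti (T x) z y w, M34 x z y w, M12 x w y z,
      hpair x (T w) y z, hbianchi x y z (T w), hanti x z y (T w),
      hpair x w y (T z), hbianchi x y (T z) w, hanti x (T z) y w, M34 x w y z,
      hpair x w (T y) z, hbianchi x (T y) z w, hanti x z (T y) w]
  -- commuting with Jacobi operators implies M34
  have hM34_of_J : (∀ x, T ∘ₗ Jop x = Jop x ∘ₗ T) →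
      (∀ x y z w, A x y (T z) w = A x y z (T w)) := by
    intro h3
    have hstar : ∀ x y z, A (T y) x x z = A y x x (T z) := by
      intro x y z
      have e : T (Jop x y) = Jop x (T y) := LinearMap.congr_fun (h3 x) y
      calc A (T y) x x z = B (Jop x (T y)) z := (hJop _ _ _).symm
        _ = B (T (Jop x y)) z := by rw [e]
        _ = B (Jop x y) (T z) := hT _ _
        _ = A y x x (T z) := hJop _ _ _
    have hpol : ∀ p q r s, A (T p) q r s + A (T p) r q s
        = A p q r (T s) + A p r q (T s) := by
      intro p q r s
      have h1 := hstar (q + r) p s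
      have h2 := hstar q p s
      have h3 := hstar r p s
      simp only [map_add, LinearMap.add_apply] at h1
      linarith
    intro x y z w
    linarith [hbianchi x y z (T w), hanti x z y (T w), hanti x w y (T z),
      hpair x w y (T z), hbianchi x y (T z) w, hanti x (T z) y w,
      hpair x (T z) y w, hbianchi x y w (T z), hanti x y w (T z), hpol y x z w,
      hanti x y z (T w), hpair x z (T y) w, hpair x z w (T y),
      hpair x w (T y) z, hbianchi x w (T y) z, hpol x y z w, hpair (T x) z y w,
      hbianchi (T x) y w z, hpair (T x) z w y, hanti (T x) w y z,
      hpair (T x) w y z, hbianchi (T x) y z w, hanti (T x) z y w,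
      hbianchi (T x) w y z, hanti (T x) y w z, hanti (T x) y z w, hpol x z w y,
      hpair (T x) w z y, hbianchi (T x) z y w, hpair x w z (T y),
      hbianchi x z (T y) w, hpol y x w z, hpol x y w z]
  -- M34 (hence full slot-moving) implies commuting with Jacobi operators
  have hJ_of_M34 : (∀ x y z w, A x y (T z) w = A x y z (T w)) →
      (∀ x, T ∘ₗ Jop x = Jop x ∘ₗ T) := by
    intro M34 x
    have M12 := hM12_of_M34 M34
    have M23 := hM23_of M12 M34
    apply LinearMap.ext
    intro y
    apply hBeq
    intro z
    calc B ((T ∘ₗ Jop x) y) z = B (T (Jop x y)) z := rfl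
      _ = B (Jop x y) (T z) := hT _ _
      _ = A y x x (T z) := hJop _ _ _
      _ = A y x (T x) z := (M34 y x x z).symm
      _ = A y (T x) x z := (M23 y x x z).symm
      _ = A (T y) x x z := (M12 y x x z).symm
      _ = B (Jop x (T y)) z := (hJop _ _ _).symm
      _ = B ((Jop x ∘ₗ T) y) z := rfl
  refine ⟨⟨fun h1 => hR_of_M34 (fun x y z w => (h1 x y z w).2.2), fun h2 x y z w => ?_⟩,
    fun h2 => hJ_of_M34 (hM34_of_R h2), fun h3 => hR_of_M34 (hM34_of_J h3)⟩
  have M34 := hM34_of_R h2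
  have M12 := hM12_of_M34 M34
  exact ⟨M12 x y z w, hM23_of M12 M34 x y z w, M34 x y z w⟩
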